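/- Let X ⊆ [0,1)^d and let D be a probability measure on X. Let S = (x₁,…,x_n) be an i.i.d. sample of size n from D and let x be drawn from D independently of S. Then E[ min_{1 ≤ i ≤ n} ‖x − x_i‖₂ ] ≤ 2√d · n^{−1/(d+1)} + (√d / (2^d · e)) · n^{−1/(d+1)}, where ‖·‖₂ is the Euclidean norm and e is Euler's number. -/

import Mathlib

open MeasureTheory


-- p(1-p)^n ≤ 1/(e n)
lemma aux_pexp (p : ℝ) (hp0 : 0 ≤ p) (hp1 : p ≤ 1) (n : ℕ) (hn : 1 ≤ n) :
    p * (1 - p) ^ n ≤ 1 / (Real.exp 1 * n) := by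
  have hn0 : (0:ℝ) < n := by exact_mod_cast hn
  have h1 : (1 - p) ^ n ≤ Real.exp (-(p * n)) := by
    calc (1 - p) ^ n ≤ Real.exp (-p) ^ n := by
          apply pow_le_pow_left₀ (by linarith)
          linarith [Real.add_one_le_exp (-p)]
      _ = Real.exp (-(p * n)) := by
          rw [← Real.exp_nat_mul]; ring_nf
  have h2 : p * n * Real.exp (-(p * n)) ≤ Real.exp (-1) := by
    have := Real.add_one_le_exp (p * n - 1)
    have he : Real.exp (p * n - 1) = Real.exp (p*n) * Real.exp (-1) := by
      rw [← Real.exp_add]; ring_nf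
    have hpe : p * n ≤ Real.exp (p*n) * Real.exp (-1) := by linarith
    have h3 : Real.exp (-(p*n)) = (Real.exp (p*n))⁻¹ := Real.exp_neg _
    rw [h3]
    rw [mul_inv_le_iff₀ (Real.exp_pos _)]
    linarith [hpe, Real.exp_pos (p*n)]
  have h4 : p * (1-p)^n ≤ p * Real.exp (-(p*n)) := by
    apply mul_le_mul_of_nonneg_left h1 hp0
  have h5 : p * Real.exp (-(p*n)) ≤ Real.exp (-1) / n := by
    rw [le_div_iff₀ hn0]
    calc p * Real.exp (-(p*n)) * n = p * n * Real.exp (-(p*n)) := by ring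
      _ ≤ Real.exp (-1) := h2
  have h6 : Real.exp (-1) / n = 1 / (Real.exp 1 * n) := by
    rw [Real.exp_neg]; field_simp
  linarith [h4, h5, h6.le, h6.ge]

lemma aux_dle (d : ℕ) : (d:ℝ) ≤ 2 * (3/2) ^ d := by
  induction d with
  | zero => norm_num
  | succ k ih =>
    have h1 : (1:ℝ) ≤ (3/2)^k := one_le_pow₀ (by norm_num : (1:ℝ) ≤ 3/2)
    push_cast
    rw [pow_succ]
    nlinarith

lemma aux_geom (d : ℕ) (r : ℝ) (h1 : 1 ≤ r) : r ^ d - 1 ≤ d * r ^ d * (r - 1) := by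
  induction d with
  | zero => norm_num
  | succ k ih =>
    have hr0 : (0:ℝ) ≤ r := by linarith
    have hrk : (1:ℝ) ≤ r ^ k := one_le_pow₀ h1
    push_cast
    rw [pow_succ]
    nlinarith [mul_le_mul_of_nonneg_left ih hr0, pow_nonneg hr0 k,
      mul_nonneg (by linarith : (0:ℝ) ≤ r - 1) (by nlinarith : (0:ℝ) ≤ r^k * r - 1)]

-- core: for 1 ≤ r ≤ 2, 1 ≤ d : r^{d+1} - r ≤ 2^{d+1} e (r-1)
lemma aux_core (d : ℕ) (hd : 1 ≤ d) (r : ℝ) (h1 : 1 ≤ r) (h2 : r ≤ 2) :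
    r ^ (d+1) - r ≤ 2 ^ (d+1) * Real.exp 1 * (r - 1) := by
  have he : (2.7:ℝ) ≤ Real.exp 1 := by
    have := Real.exp_one_gt_d9
    linarith
  have hr0 : (0:ℝ) ≤ r := by linarith
  rcases le_or_gt r (4/3) with hc | hc
  · -- r ≤ 4/3 : use geom bound and d r^{d+1} ≤ 2^{d+1} e
    have hg := aux_geom (d+1) r h1  -- r^{d+1} - 1 ≤ (d+1) r^{d+1} (r-1)
    have hdb : ((d:ℝ)+1) * r ^ (d+1) ≤ 2 ^ (d+1) * Real.exp 1 := by
      have h43 : r ^ (d+1) ≤ (4/3:ℝ) ^ (d+1) := pow_le_pow_left₀ hr0 hc (d+1)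
      have hdd : ((d:ℝ)+1) ≤ 2 * ((3/2):ℝ) ^ (d+1) := by
        have := aux_dle (d+1); push_cast at this ⊢; linarith
      have hpos : (0:ℝ) < (4/3:ℝ)^(d+1) := by positivity
      calc ((d:ℝ)+1) * r^(d+1) ≤ (2 * (3/2)^(d+1)) * (4/3)^(d+1) := by
            apply mul_le_mul hdd h43 (by positivity) (by positivity)
        _ = 2 * 2 ^ (d+1) := by
            rw [mul_assoc, ← mul_pow]; norm_num
        _ ≤ 2 ^ (d+1) * Real.exp 1 := by nlinarith [pow_pos (by norm_num : (0:ℝ) < 2) (d+1)]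
    push_cast at hg
    linarith [mul_le_mul_of_nonneg_right hdb (by linarith : (0:ℝ) ≤ r - 1)]
  · -- r ≥ 4/3
    have hq : r^2 ≤ 4 * Real.exp 1 * (r - 1) := by nlinarith
    have hr2 : r / 2 ≤ 1 := by linarith
    have hr20 : 0 ≤ r / 2 := by linarith
    have hp : (r/2) ^ (d+1) ≤ (r/2) ^ 2 := pow_le_pow_of_le_one hr20 hr2 (by omega)
    have hkey : r ^ (d+1) ≤ 2 ^ (d+1) * Real.exp 1 * (r - 1) := by
      have h2p : (0:ℝ) < 2 ^ (d+1) := by positivity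
      have : r ^ (d+1) = 2 ^ (d+1) * (r/2)^(d+1) := by
        rw [div_pow, mul_div_cancel₀]
        positivity
      rw [this]
      calc 2^(d+1) * (r/2)^(d+1) ≤ 2^(d+1) * (r/2)^2 := by
            apply mul_le_mul_of_nonneg_left hp h2p.le
        _ ≤ 2^(d+1) * Real.exp 1 * (r-1) := by
            have : (r/2)^2 = r^2/4 := by ring
            rw [this]
            calc 2^(d+1) * (r^2/4) ≤ 2^(d+1) * (Real.exp 1 * (r-1)) := by
                  apply mul_le_mul_of_nonneg_left _ h2p.le
                  linarith
              _ = 2^(d+1) * Real.exp 1 * (r-1) := by ring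
    linarith


lemma aux_arith (d : ℕ) (hd : 1 ≤ d) (t : ℝ) (ht : 1 ≤ t) (m : ℕ)
    (hm1 : t / 2 ≤ (m:ℝ)) (hm2 : (m:ℝ) ≤ t) :
    1/(m:ℝ) + (m:ℝ)^d / (Real.exp 1 * t^(d+1)) ≤ 2/t + 1/(2^d * Real.exp 1 * t) := by
  have ht0 : (0:ℝ) < t := by linarith
  have hm0 : (0:ℝ) < (m:ℝ) := by linarith
  have he : (0:ℝ) < Real.exp 1 := Real.exp_pos 1
  set r : ℝ := 2 * m / t with hrdef
  have hr1 : 1 ≤ r := by rw [hrdef, le_div_iff₀ ht0]; linarith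
  have hr2 : r ≤ 2 := by rw [hrdef, div_le_iff₀ ht0]; linarith
  have key := aux_core d hd r hr1 hr2
  have hrt : r * t = 2 * m := by rw [hrdef]; field_simp
  -- multiply key by t^(d+1)
  have htp : (0:ℝ) < t ^ (d+1) := pow_pos ht0 _
  have key2 := mul_le_mul_of_nonneg_right key htp.le
  have e1 : r ^ (d+1) * t ^ (d+1) = 2^(d+1) * (m:ℝ)^(d+1) := by
    rw [← mul_pow, hrt, mul_pow]
  have e2 : r * t ^ (d+1) = 2 * m * t ^ d := by
    rw [pow_succ]
    calc r * (t^d * t) = (r * t) * t^d := by ring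
      _ = 2 * m * t ^ d := by rw [hrt]
  -- polynomial form
  have poly : 2^(d+1) * (m:ℝ)^(d+1) - 2*m*t^d ≤ 2^(d+1) * Real.exp 1 * (2*m*t^d - t^(d+1)) := by
    have : (r ^ (d+1) - r) * t^(d+1) = 2^(d+1)*(m:ℝ)^(d+1) - 2*m*t^d := by
      rw [sub_mul, e1, e2]
    rw [this] at key2
    calc 2^(d+1) * (m:ℝ)^(d+1) - 2*m*t^d ≤ 2^(d+1) * Real.exp 1 * (r-1) * t^(d+1) := key2
      _ = 2^(d+1) * Real.exp 1 * (r * t^(d+1) - t^(d+1)) := by ring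
      _ = 2^(d+1) * Real.exp 1 * (2*m*t^d - t^(d+1)) := by rw [e2]
  -- now clear denominators in the goal
  have hB : (0:ℝ) < 2^d := by positivity
  have hT : (0:ℝ) < t^d := pow_pos ht0 _
  have hM : (0:ℝ) < (m:ℝ)^d := pow_pos hm0 _
  have hps : t^(d+1) = t^d * t := pow_succ t d
  have hms : (m:ℝ)^(d+1) = (m:ℝ)^d * m := pow_succ (m:ℝ) d
  have hbs : (2:ℝ)^(d+1) = 2^d * 2 := pow_succ 2 d
  rw [hps, hms, hbs] at poly
  rw [hps]
  rw [div_add_div _ _ (ne_of_gt hm0) (by positivity), div_add_div _ _ (ne_of_gt ht0) (by positivity),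
    div_le_div_iff₀ (by positivity) (by positivity)]
  ring_nf
  ring_nf at poly
  nlinarith [poly, mul_le_mul_of_nonneg_right poly (mul_nonneg he.le ht0.le), hT, hM, hB, he, ht0, hm0]


set_option maxHeartbeats 2000000 in
/-- Lemma 6 / `L15` of the paper, motivated by Lemma 19.3 of
Shalev-Shwartz & Ben-David.  Let `X ⊆ [0,1)^d` and `D` a probability measure on `X`.
Drawing an i.i.d. sample `S = (x₁,…,x_n)` from `D^n` and an independent point `x` from
`D`, the expected Euclidean distance from `x` to its nearest neighbor in `S` is at most
`2√d·n^{-1/(d+1)} + (√d/(2^d·e))·n^{-1/(d+1)}`. -/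
theorem stmt19 {d : ℕ} (X : Set (EuclideanSpace ℝ (Fin d)))
    (hX : ∀ x ∈ X, ∀ i, x i ∈ Set.Ico (0 : ℝ) 1)
    (D : Measure ↥X) [IsProbabilityMeasure D] (n : ℕ) (hn : 1 ≤ n) :
    ∫ p : ↥X × (Fin n → ↥X),
        (⨅ i : Fin n,
          ‖(p.1 : EuclideanSpace ℝ (Fin d)) - (p.2 i : EuclideanSpace ℝ (Fin d))‖)
      ∂(D.prod (Measure.pi fun _ : Fin n => D))
      ≤ 2 * Real.sqrt d * (n : ℝ) ^ (-(1 : ℝ) / ((d : ℝ) + 1))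
        + Real.sqrt d / (2 ^ d * Real.exp 1) * (n : ℝ) ^ (-(1 : ℝ) / ((d : ℝ) + 1)) := by
  classical
  have hnE : Nonempty (Fin n) := ⟨⟨0, hn⟩⟩
  rcases Nat.eq_zero_or_pos d with rfl | hd
  · -- d = 0 : everything is zero
    have h0 : ∀ p : ↥X × (Fin n → ↥X),
        (⨅ i : Fin n, ‖(p.1 : EuclideanSpace ℝ (Fin 0)) - (p.2 i : EuclideanSpace ℝ (Fin 0))‖)
          = 0 := by
      intro p
      have h1 : ∀ i : Fin n,
          ‖(p.1 : EuclideanSpace ℝ (Fin 0)) - (p.2 i : EuclideanSpace ℝ (Fin 0))‖ = 0 := by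
        intro i
        rw [norm_eq_zero]
        exact Subsingleton.elim _ _
      simp only [h1, ciInf_const]
    simp only [h0, integral_zero, Nat.cast_zero, Real.sqrt_zero, mul_zero, zero_mul,
      zero_div, zero_add, le_refl]
  · classical
    have hnE : Nonempty (Fin n) := ⟨⟨0, hn⟩⟩
    set t : ℝ := (n:ℝ) ^ ((1:ℝ)/((d:ℝ)+1)) with htdef
    have hn1 : (1:ℝ) ≤ (n:ℝ) := by exact_mod_cast hn
    have ht1 : 1 ≤ t := by
      rw [htdef]
      calc (1:ℝ) = 1 ^ ((1:ℝ)/((d:ℝ)+1)) := (Real.one_rpow _).symm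
        _ ≤ (n:ℝ) ^ ((1:ℝ)/((d:ℝ)+1)) := by
            apply Real.rpow_le_rpow (by norm_num) hn1 (by positivity)
    set m : ℕ := ⌈t/2⌉₊ with hmdef
    have hm1 : t/2 ≤ (m:ℝ) := Nat.le_ceil _
    have hm2 : (m:ℝ) ≤ t := by
      rcases le_or_gt t 2 with h | h
      · have hm1' : m ≤ 1 := by
          rw [hmdef, Nat.ceil_le]
          push_cast
          linarith
        have : (m:ℝ) ≤ 1 := by exact_mod_cast hm1'
        linarith
      · have := Nat.ceil_lt_add_one (by positivity : (0:ℝ) ≤ t/2)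
        rw [hmdef]; push_cast at this ⊢; linarith
    have hm0 : 0 < m := by
      by_contra h
      push_neg at h
      interval_cases m
      · simp at hm1; linarith
    have hm0' : (0:ℝ) < m := by exact_mod_cast hm0
    have htn0 : True := trivial
    have htn : t ^ (d+1) = n := by
      rw [htdef, ← Real.rpow_natCast ((n:ℝ) ^ ((1:ℝ)/((d:ℝ)+1))) (d+1),
        ← Real.rpow_mul (by positivity)]
      rw [show (1:ℝ)/((d:ℝ)+1) * ((d:ℕ)+1 : ℕ) = 1 by push_cast; field_simp]
      exact Real.rpow_one _
    clear_value t
    -- the cube-index map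
    have hfloor : ∀ (x : ↥X) (i : Fin d), ⌊(m:ℝ) * (x : EuclideanSpace ℝ (Fin d)) i⌋₊ < m := by
      intro x i
      have hx := hX x x.2 i
      have h1 : (m:ℝ) * (x : EuclideanSpace ℝ (Fin d)) i < m := by nlinarith [hx.1, hx.2]
      exact (Nat.floor_lt (by nlinarith [hx.1])).2 h1
    set κ : ↥X → (Fin d → Fin m) :=
      fun x i => ⟨⌊(m:ℝ) * (x : EuclideanSpace ℝ (Fin d)) i⌋₊, hfloor x i⟩ with hκdef
    -- measurability of cube sets
    have hmeasB : ∀ c : Fin d → Fin m, MeasurableSet (κ ⁻¹' {c}) := by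
      intro c
      have heq : κ ⁻¹' {c} = ⋂ i, (fun x : ↥X => (m:ℝ) * (x : EuclideanSpace ℝ (Fin d)) i) ⁻¹'
          (Set.Ico ((c i : ℕ) : ℝ) (((c i : ℕ) : ℝ) + 1)) := by
        ext x
        simp only [Set.mem_preimage, Set.mem_singleton_iff, Set.mem_iInter, Set.mem_Ico,
          funext_iff, hκdef, Fin.ext_iff]
        refine forall_congr' fun i => ?_
        have h0 : 0 ≤ (m:ℝ) * (x : EuclideanSpace ℝ (Fin d)) i :=
          mul_nonneg (by positivity) (hX x x.2 i).1
        exact Nat.floor_eq_iff h0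
      rw [heq]
      refine MeasurableSet.iInter fun i => ?_
      have hmeas : Measurable (fun x : ↥X => (m:ℝ) * (x : EuclideanSpace ℝ (Fin d)) i) :=
        (((EuclideanSpace.proj i).continuous.measurable).comp measurable_subtype_coe).const_mul _
      exact hmeas measurableSet_Ico
    -- geometry: diameter bound
    have hdiam : ∀ x y : ↥X,
        ‖(x : EuclideanSpace ℝ (Fin d)) - (y : EuclideanSpace ℝ (Fin d))‖ ≤ Real.sqrt d := by
      intro x y
      rw [EuclideanSpace.norm_eq]
      apply Real.sqrt_le_sqrt
      calc ∑ i, ‖((x : EuclideanSpace ℝ (Fin d)) - (y : EuclideanSpace ℝ (Fin d))) i‖ ^ 2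
          ≤ ∑ _i : Fin d, (1:ℝ) := by
            apply Finset.sum_le_sum
            intro i _
            have hxi := hX x x.2 i
            have hyi := hX y y.2 i
            have happ : ((x : EuclideanSpace ℝ (Fin d)) - (y : EuclideanSpace ℝ (Fin d))) i
                = (x : EuclideanSpace ℝ (Fin d)) i - (y : EuclideanSpace ℝ (Fin d)) i := rfl
            rw [happ, Real.norm_eq_abs, sq_abs]
            nlinarith [hxi.1, hxi.2, hyi.1, hyi.2]
        _ = (d:ℝ) := by simp
    -- geometry: same-cube bound
    have hsame : ∀ x y : ↥X, κ x = κ y →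
        ‖(x : EuclideanSpace ℝ (Fin d)) - (y : EuclideanSpace ℝ (Fin d))‖ ≤ Real.sqrt d / m := by
      intro x y hxy
      have hcoord : ∀ i : Fin d,
          |(x : EuclideanSpace ℝ (Fin d)) i - (y : EuclideanSpace ℝ (Fin d)) i| ≤ 1 / m := by
        intro i
        have hfl : ⌊(m:ℝ) * (x : EuclideanSpace ℝ (Fin d)) i⌋₊
            = ⌊(m:ℝ) * (y : EuclideanSpace ℝ (Fin d)) i⌋₊ := by
          have h := congrArg Fin.val (congrFun hxy i)
          simpa [hκdef] using h
        set k : ℕ := ⌊(m:ℝ) * (x : EuclideanSpace ℝ (Fin d)) i⌋₊ with hk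
        have hx0 : 0 ≤ (m:ℝ) * (x : EuclideanSpace ℝ (Fin d)) i :=
          mul_nonneg (by positivity) (hX x x.2 i).1
        have hy0 : 0 ≤ (m:ℝ) * (y : EuclideanSpace ℝ (Fin d)) i :=
          mul_nonneg (by positivity) (hX y y.2 i).1
        have h1 : (k:ℝ) ≤ (m:ℝ) * (x : EuclideanSpace ℝ (Fin d)) i := Nat.floor_le hx0
        have h2 : (m:ℝ) * (x : EuclideanSpace ℝ (Fin d)) i < k + 1 := Nat.lt_floor_add_one _
        have h3 : (k:ℝ) ≤ (m:ℝ) * (y : EuclideanSpace ℝ (Fin d)) i := by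
          rw [hfl]; exact Nat.floor_le hy0
        have h4 : (m:ℝ) * (y : EuclideanSpace ℝ (Fin d)) i < k + 1 := by
          rw [hfl]; exact Nat.lt_floor_add_one _
        refine abs_le.2 ⟨?_, ?_⟩
        · have h5 : ((y : EuclideanSpace ℝ (Fin d)) i - (x : EuclideanSpace ℝ (Fin d)) i) * m ≤ 1 := by
            nlinarith
          have h6 := (le_div_iff₀ hm0').2 h5
          linarith
        · have h5 : ((x : EuclideanSpace ℝ (Fin d)) i - (y : EuclideanSpace ℝ (Fin d)) i) * m ≤ 1 := by
            nlinarith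
          exact (le_div_iff₀ hm0').2 h5
      rw [EuclideanSpace.norm_eq]
      have hstep : ∑ i, ‖((x : EuclideanSpace ℝ (Fin d)) - (y : EuclideanSpace ℝ (Fin d))) i‖ ^ 2
          ≤ (d:ℝ) * (1/m)^2 := by
        calc ∑ i, ‖((x : EuclideanSpace ℝ (Fin d)) - (y : EuclideanSpace ℝ (Fin d))) i‖ ^ 2
            ≤ ∑ _i : Fin d, (1/(m:ℝ))^2 := by
              apply Finset.sum_le_sum
              intro i _
              have happ : ((x : EuclideanSpace ℝ (Fin d)) - (y : EuclideanSpace ℝ (Fin d))) i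
                  = (x : EuclideanSpace ℝ (Fin d)) i - (y : EuclideanSpace ℝ (Fin d)) i := rfl
              rw [happ, Real.norm_eq_abs, sq_abs]
              have := hcoord i
              nlinarith [abs_nonneg ((x : EuclideanSpace ℝ (Fin d)) i - (y : EuclideanSpace ℝ (Fin d)) i),
                abs_le.1 this]
          _ = (d:ℝ) * (1/m)^2 := by simp [mul_comm]
      calc Real.sqrt (∑ i, ‖((x : EuclideanSpace ℝ (Fin d)) - (y : EuclideanSpace ℝ (Fin d))) i‖ ^ 2)
          ≤ Real.sqrt ((d:ℝ) * (1/m)^2) := Real.sqrt_le_sqrt hstep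
        _ = Real.sqrt d / m := by
            rw [Real.sqrt_mul (by positivity), Real.sqrt_sq (by positivity)]
            field_simp
    clear_value κ
    clear_value m
    set μ : Measure (↥X × (Fin n → ↥X)) := D.prod (Measure.pi fun _ : Fin n => D) with hμdef
    set A : Set (↥X × (Fin n → ↥X)) := {p | ∀ i, κ (p.2 i) ≠ κ p.1} with hAdef
    have hA : A = ⋃ c : Fin d → Fin m,
        (κ ⁻¹' {c}) ×ˢ (Set.pi Set.univ fun _ : Fin n => κ ⁻¹' {c}ᶜ) := by
      ext ⟨x, f⟩
      simp only [hAdef, Set.mem_setOf_eq, Set.mem_iUnion, Set.mem_prod, Set.mem_preimage,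
        Set.mem_singleton_iff, Set.mem_pi, Set.mem_univ, forall_true_left, Set.mem_compl_iff,
        true_implies]
      constructor
      · intro h
        exact ⟨κ x, rfl, fun i => by simpa using h i⟩
      · rintro ⟨c, rfl, h⟩ i
        simpa using h i
    have hmeasProd : ∀ c : Fin d → Fin m,
        MeasurableSet ((κ ⁻¹' {c}) ×ˢ (Set.pi Set.univ fun _ : Fin n => κ ⁻¹' {c}ᶜ)) := by
      intro c
      exact (hmeasB c).prod (MeasurableSet.univ_pi fun i => (hmeasB c).compl)
    have hAmeas : MeasurableSet A := by
      rw [hA]; exact MeasurableSet.iUnion fun c => hmeasProd c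
    have hdisj : Pairwise (Function.onFun Disjoint fun c : Fin d → Fin m =>
        (κ ⁻¹' {c}) ×ˢ (Set.pi Set.univ fun _ : Fin n => κ ⁻¹' {c}ᶜ)) := by
      intro c c' hcc
      refine Set.disjoint_left.2 ?_
      rintro ⟨x, f⟩ ⟨hx, -⟩ ⟨hx', -⟩
      simp only [Set.mem_preimage, Set.mem_singleton_iff] at hx hx'
      exact hcc (hx ▸ hx')
    have hμA : μ A = ∑ c : Fin d → Fin m, D (κ ⁻¹' {c}) * (1 - D (κ ⁻¹' {c})) ^ n := by
      rw [hA, measure_iUnion hdisj hmeasProd, tsum_fintype]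
      refine Finset.sum_congr rfl fun c _ => ?_
      rw [hμdef, Measure.prod_prod, Measure.pi_pi]
      have hcompl : D (κ ⁻¹' {c}ᶜ) = 1 - D (κ ⁻¹' {c}) := by
        rw [Set.preimage_compl, measure_compl (hmeasB c) (measure_ne_top D _), measure_univ]
      rw [hcompl, Finset.prod_const, Finset.card_univ, Fintype.card_fin]
    have hsum : (μ A).toReal ≤ (m:ℝ)^d / (Real.exp 1 * n) := by
      rw [hμA]
      rw [ENNReal.toReal_sum (fun c _ => ?_)]
      swap
      · exact ENNReal.mul_ne_top (measure_ne_top D _)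
          (ENNReal.pow_ne_top (ne_top_of_le_ne_top ENNReal.one_ne_top tsub_le_self))
      calc ∑ c : Fin d → Fin m, (D (κ ⁻¹' {c}) * (1 - D (κ ⁻¹' {c})) ^ n).toReal
          ≤ ∑ _c : (Fin d → Fin m), (1 / (Real.exp 1 * n) : ℝ) := by
            refine Finset.sum_le_sum fun c _ => ?_
            have hple : D (κ ⁻¹' {c}) ≤ 1 := prob_le_one
            have hp1 : (D (κ ⁻¹' {c})).toReal ≤ 1 := by
              simpa using ENNReal.toReal_mono ENNReal.one_ne_top hple
            have hsub : ((1 : ENNReal) - D (κ ⁻¹' {c})).toReal = 1 - (D (κ ⁻¹' {c})).toReal := by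
              rw [ENNReal.toReal_sub_of_le hple ENNReal.one_ne_top, ENNReal.toReal_one]
            rw [ENNReal.toReal_mul, ENNReal.toReal_pow, hsub]
            exact aux_pexp _ ENNReal.toReal_nonneg hp1 n hn
        _ = (m:ℝ)^d / (Real.exp 1 * n) := by
            rw [Finset.sum_const, Finset.card_univ, nsmul_eq_mul]
            have hcard : Fintype.card (Fin d → Fin m) = m ^ d := by
              simp [Fintype.card_fun]
            rw [hcard]
            push_cast
            field_simp
    have hbdd : ∀ p : ↥X × (Fin n → ↥X), BddBelow (Set.range fun i : Fin n =>
        ‖(p.1 : EuclideanSpace ℝ (Fin d)) - (p.2 i : EuclideanSpace ℝ (Fin d))‖) := by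
      intro p
      refine ⟨0, ?_⟩
      rintro a ⟨j, rfl⟩
      exact norm_nonneg _
    have hf0 : ∀ p : ↥X × (Fin n → ↥X), 0 ≤ ⨅ i : Fin n,
        ‖(p.1 : EuclideanSpace ℝ (Fin d)) - (p.2 i : EuclideanSpace ℝ (Fin d))‖ := by
      intro p
      exact le_ciInf fun i => norm_nonneg _
    have hfub : ∀ p : ↥X × (Fin n → ↥X), (⨅ i : Fin n,
        ‖(p.1 : EuclideanSpace ℝ (Fin d)) - (p.2 i : EuclideanSpace ℝ (Fin d))‖) ≤ Real.sqrt d := by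
      intro p
      exact le_trans (ciInf_le (hbdd p) (Classical.arbitrary (Fin n))) (hdiam _ _)
    have hfm : Measurable (fun p : ↥X × (Fin n → ↥X) => ⨅ i : Fin n,
        ‖(p.1 : EuclideanSpace ℝ (Fin d)) - (p.2 i : EuclideanSpace ℝ (Fin d))‖) := by
      refine Measurable.iInf fun i => ?_
      have hc : Continuous fun p : ↥X × (Fin n → ↥X) =>
          ‖(p.1 : EuclideanSpace ℝ (Fin d)) - (p.2 i : EuclideanSpace ℝ (Fin d))‖ := by
        apply Continuous.norm
        exact (continuous_subtype_val.comp continuous_fst).sub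
          (continuous_subtype_val.comp ((continuous_apply i).comp continuous_snd))
      exact hc.measurable
    have hsq0 : (0:ℝ) ≤ Real.sqrt d / m := div_nonneg (Real.sqrt_nonneg _) hm0'.le
    have hpt : ∀ p : ↥X × (Fin n → ↥X), (⨅ i : Fin n,
        ‖(p.1 : EuclideanSpace ℝ (Fin d)) - (p.2 i : EuclideanSpace ℝ (Fin d))‖)
        ≤ Real.sqrt d / m + A.indicator (fun _ => Real.sqrt d) p := by
      intro p
      rcases Classical.em (p ∈ A) with hp | hp
      · rw [Set.indicator_of_mem hp]
        linarith [hfub p]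
      · rw [Set.indicator_of_notMem hp, add_zero]
        rw [hAdef] at hp
        simp only [Set.mem_setOf_eq, not_forall, not_not] at hp
        obtain ⟨i, hi⟩ := hp
        refine le_trans (ciInf_le (hbdd p) i) ?_
        rw [norm_sub_rev]
        exact hsame (p.2 i) p.1 hi
    have hf_int : Integrable (fun p : ↥X × (Fin n → ↥X) => ⨅ i : Fin n,
        ‖(p.1 : EuclideanSpace ℝ (Fin d)) - (p.2 i : EuclideanSpace ℝ (Fin d))‖) μ := by
      refine (integrable_const (Real.sqrt d)).mono' hfm.aestronglyMeasurable ?_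
      filter_upwards with p
      rw [Real.norm_eq_abs, abs_of_nonneg (hf0 p)]
      exact hfub p
    have hg_int : Integrable
        (fun p : ↥X × (Fin n → ↥X) => Real.sqrt d / m + A.indicator (fun _ => Real.sqrt d) p) μ := by
      refine (integrable_const _).add ?_
      exact (integrable_const _).indicator hAmeas
    have hint1 : (∫ p : ↥X × (Fin n → ↥X), (⨅ i : Fin n,
          ‖(p.1 : EuclideanSpace ℝ (Fin d)) - (p.2 i : EuclideanSpace ℝ (Fin d))‖) ∂μ)
        ≤ ∫ p, (Real.sqrt d / m + A.indicator (fun _ => Real.sqrt d) p) ∂μ :=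
      integral_mono hf_int hg_int hpt
    have hint2 : (∫ p, (Real.sqrt d / m + A.indicator (fun _ => Real.sqrt d) p) ∂μ)
        = Real.sqrt d / m + (μ A).toReal * Real.sqrt d := by
      rw [integral_add (integrable_const _) ((integrable_const _).indicator hAmeas)]
      rw [integral_indicator_const _ hAmeas, integral_const]
      simp [measure_univ, Measure.real]
    have harr := aux_arith d hd t ht1 m hm1 hm2
    rw [htn] at harr
    have hrpow : (n:ℝ) ^ (-(1:ℝ)/((d:ℝ)+1)) = 1/t := by
      rw [neg_div, Real.rpow_neg (by positivity), ← htdef, one_div]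
    rw [hrpow]
    refine le_trans (le_trans hint1 (le_of_eq hint2)) ?_
    calc Real.sqrt d / m + (μ A).toReal * Real.sqrt d
        ≤ Real.sqrt d / m + ((m:ℝ)^d/(Real.exp 1 * n)) * Real.sqrt d :=
          add_le_add_right (mul_le_mul_of_nonneg_right hsum (Real.sqrt_nonneg _)) _
      _ = Real.sqrt d * (1/(m:ℝ) + (m:ℝ)^d/(Real.exp 1 * n)) := by ring
      _ ≤ Real.sqrt d * (2/t + 1/(2^d * Real.exp 1 * t)) :=
          mul_le_mul_of_nonneg_left harr (Real.sqrt_nonneg _)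
      _ = 2 * Real.sqrt d * (1/t) + Real.sqrt d / (2^d * Real.exp 1) * (1/t) := by ring
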